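/- An irrational x ∈ (0,1) is a Wilton number if and only if α(x) is a Wilton number, and in that case the Wilton function satisfies the functional equation W(x) = log(1/x) − x·W(α(x)). -/

import Mathlib

open Filter

/-- Iterates of the Gauss map: `α₀(x) = x`, `α_k(x) = {1/α_{k-1}(x)}`. -/
noncomputable def alphaIter (x : ℝ) (k : ℕ) : ℝ := (fun y => Int.fract y⁻¹)^[k] x

/-- `γ_k(x) = β_{k-1}(x) log(1/α_k(x))` where `β_{k-1}(x) = α₀(x)⋯α_{k-1}(x)`. -/
noncomputable def gammaTerm (x : ℝ) (k : ℕ) : ℝ :=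
  (∏ i ∈ Finset.range k, alphaIter x i) * Real.log (1 / alphaIter x k)

/-- `x` is a Wilton number if `Σ_{k≥0} (−1)^k γ_k(x)` converges. -/
def IsWilton (x : ℝ) : Prop :=
  ∃ S : ℝ, Tendsto (fun N => ∑ k ∈ Finset.range N, (-1 : ℝ) ^ k * gammaTerm x k) atTop (nhds S)

lemma alphaIter_succ (x : ℝ) (k : ℕ) :
    alphaIter x (k + 1) = alphaIter (Int.fract x⁻¹) k := by
  simp [alphaIter, Function.iterate_succ_apply]

lemma alphaIter_zero (x : ℝ) : alphaIter x 0 = x := rfl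

lemma gammaTerm_succ (x : ℝ) (k : ℕ) :
    gammaTerm x (k + 1) = x * gammaTerm (Int.fract x⁻¹) k := by
  unfold gammaTerm
  rw [Finset.prod_range_succ']
  simp only [alphaIter_succ, alphaIter_zero]
  ring

lemma partial_sum_rel (x : ℝ) (N : ℕ) :
    ∑ k ∈ Finset.range (N + 1), (-1 : ℝ) ^ k * gammaTerm x k
      = Real.log (1 / x)
        - x * ∑ k ∈ Finset.range N, (-1 : ℝ) ^ k * gammaTerm (Int.fract x⁻¹) k := by
  rw [Finset.sum_range_succ']
  simp only [gammaTerm_succ]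
  have h0 : gammaTerm x 0 = Real.log (1 / x) := by
    simp [gammaTerm, alphaIter_zero]
  rw [h0, Finset.mul_sum]
  have : ∑ k ∈ Finset.range N, (-1 : ℝ) ^ (k + 1) * (x * gammaTerm (Int.fract x⁻¹) k)
      = -∑ k ∈ Finset.range N, x * ((-1 : ℝ) ^ k * gammaTerm (Int.fract x⁻¹) k) := by
    rw [← Finset.sum_neg_distrib]
    exact Finset.sum_congr rfl fun k _ => by ring
  rw [this]; ring

theorem wilton_iff_and_functional_equation (x : ℝ) (hx : x ∈ Set.Ioo (0:ℝ) 1)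
    (hirr : Irrational x) :
    (IsWilton x ↔ IsWilton (Int.fract x⁻¹)) ∧
    (∀ S S' : ℝ,
      Tendsto (fun N => ∑ k ∈ Finset.range N, (-1 : ℝ) ^ k * gammaTerm x k) atTop (nhds S) →
      Tendsto (fun N => ∑ k ∈ Finset.range N, (-1 : ℝ) ^ k * gammaTerm (Int.fract x⁻¹) k)
        atTop (nhds S') →
      S = Real.log (1 / x) - x * S') := by
  have hx0 : x ≠ 0 := ne_of_gt hx.1
  constructor
  · constructor
    · rintro ⟨S, hS⟩
      refine ⟨(Real.log (1 / x) - S) / x, ?_⟩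
      have h1 : Tendsto (fun N => ∑ k ∈ Finset.range (N + 1), (-1 : ℝ) ^ k * gammaTerm x k)
          atTop (nhds S) := hS.comp (tendsto_add_atTop_nat 1)
      have h2 : Tendsto (fun N =>
          (Real.log (1 / x) - ∑ k ∈ Finset.range (N + 1), (-1 : ℝ) ^ k * gammaTerm x k) / x)
          atTop (nhds ((Real.log (1 / x) - S) / x)) :=
        (tendsto_const_nhds.sub h1).div_const x
      refine h2.congr fun N => ?_
      rw [partial_sum_rel]
      field_simp
      ring
    · rintro ⟨S', hS'⟩
      refine ⟨Real.log (1 / x) - x * S', ?_⟩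
      rw [← tendsto_add_atTop_iff_nat 1]
      have h2 : Tendsto (fun N => Real.log (1 / x)
          - x * ∑ k ∈ Finset.range N, (-1 : ℝ) ^ k * gammaTerm (Int.fract x⁻¹) k)
          atTop (nhds (Real.log (1 / x) - x * S')) :=
        tendsto_const_nhds.sub (hS'.const_mul x)
      exact h2.congr fun N => (partial_sum_rel x N).symm
  · intro S S' hS hS'
    have h1 : Tendsto (fun N => ∑ k ∈ Finset.range (N + 1), (-1 : ℝ) ^ k * gammaTerm x k)
        atTop (nhds S) := hS.comp (tendsto_add_atTop_nat 1)
    have h2 : Tendsto (fun N => ∑ k ∈ Finset.range (N + 1), (-1 : ℝ) ^ k * gammaTerm x k)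
        atTop (nhds (Real.log (1 / x) - x * S')) := by
      exact (tendsto_const_nhds.sub (hS'.const_mul x)).congr fun N => (partial_sum_rel x N).symm
    exact tendsto_nhds_unique h1 h2
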